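/- For every integer t ≥ 2, all positive integers r_1, …, r_t, and every integer n with n ≥ max_i r_i + 1 + Σ_{i=1}^t (r_i − 1), every t-coloring χ of E(K_n) contains, for some color i ∈ {1,…,t}, a matching of size r_i in color i. -/

import Mathlib

/-- A matching of size `r` in color `i`: a set of `r` pairwise vertex-disjoint
(non-loop) edges of `K_n`, each assigned color `i` by `χ`. -/
def IsColorMatching {n t : ℕ} (χ : Sym2 (Fin n) → Fin t) (i : Fin t) (r : ℕ) : Prop :=
  ∃ M : Finset (Sym2 (Fin n)), M.card = r ∧
    (∀ e ∈ M, ¬ e.IsDiag ∧ χ e = i) ∧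
    (∀ e ∈ M, ∀ f ∈ M, e ≠ f → ∀ v : Fin n, v ∈ e → v ∉ f)

namespace CockayneLorimer

variable {n t : ℕ}

/-- A matching of size `m` in color `i` all of whose edges lie inside the vertex set `A`. -/
def MatchIn (χ : Sym2 (Fin n) → Fin t) (i : Fin t) (m : ℕ) (A : Finset (Fin n)) : Prop :=
  ∃ M : Finset (Sym2 (Fin n)), M.card = m ∧
    (∀ e ∈ M, ¬ e.IsDiag ∧ χ e = i ∧ ∀ v ∈ e, v ∈ A) ∧
    (∀ e ∈ M, ∀ f ∈ M, e ≠ f → ∀ v : Fin n, v ∈ e → v ∉ f)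

theorem MatchIn.mono {χ : Sym2 (Fin n) → Fin t} {i : Fin t} {m : ℕ}
    {A B : Finset (Fin n)} (hAB : A ⊆ B) (h : MatchIn χ i m A) : MatchIn χ i m B := by
  obtain ⟨M, h1, h2, h3⟩ := h
  exact ⟨M, h1, fun e he => ⟨(h2 e he).1, (h2 e he).2.1, fun v hv => hAB ((h2 e he).2.2 v hv)⟩, h3⟩

theorem matchIn_single {χ : Sym2 (Fin n) → Fin t} {A : Finset (Fin n)}
    {x y : Fin n} (hx : x ∈ A) (hy : y ∈ A) (hxy : x ≠ y) :
    MatchIn χ (χ (s(x, y))) 1 A := by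
  refine ⟨{s(x, y)}, by simp, ?_, ?_⟩
  · intro e he
    simp only [Finset.mem_singleton] at he
    subst he
    refine ⟨by simp [Sym2.mk_isDiag_iff, hxy], rfl, ?_⟩
    intro v hv
    rw [Sym2.mem_iff] at hv
    rcases hv with h | h <;> subst h <;> assumption
  · intro e he f hf hef
    simp only [Finset.mem_singleton] at he hf
    exact absurd (he.trans hf.symm) hef

theorem sum_card_update (F : Fin t → Finset (Sym2 (Fin n))) (k : Fin t)
    (v : Finset (Sym2 (Fin n))) :
    ∑ c, ((Function.update F k v) c).card + (F k).card = ∑ c, (F c).card + v.card := by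
  have e1 : ∑ c, ((Function.update F k v) c).card
      = ∑ c ∈ Finset.univ \ {k}, ((Function.update F k v) c).card
        + ((Function.update F k v) k).card :=
    Finset.sum_eq_sum_sdiff_singleton_add (Finset.mem_univ k) _
  have e2 : ∑ c, (F c).card = ∑ c ∈ Finset.univ \ {k}, (F c).card + (F k).card :=
    Finset.sum_eq_sum_sdiff_singleton_add (Finset.mem_univ k) _
  have e3 : ∑ c ∈ Finset.univ \ {k}, ((Function.update F k v) c).card
      = ∑ c ∈ Finset.univ \ {k}, (F c).card := by
    apply Finset.sum_congr rfl
    intro c hc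
    have hck : c ≠ k := by simpa using (Finset.mem_sdiff.mp hc).2
    rw [Function.update_of_ne hck]
  have e4 : (Function.update F k v) k = v := Function.update_self k v F
  rw [e1, e3, e4, e2]
  omega

theorem counting (χ : Sym2 (Fin n) → Fin t) (S : Finset (Fin n))
    (F : Fin t → Finset (Sym2 (Fin n))) (x y : Fin n)
    (hFcol : ∀ c, ∀ e ∈ F c, ¬ e.IsDiag ∧ χ e = c)
    (hcard : S.card = 1 + ∑ c, (F c).card)
    (hnP1 : ∀ u ∈ S, ∀ z : Fin n, (z = x ∨ z = y) →
      ∃ g ∈ F (χ (s(u, z))), u ∈ g)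
    (hnP2 : ∀ (c : Fin t) (g : Sym2 (Fin n)), g ∈ F c → ∀ u u' : Fin n, u ∈ g → u' ∈ g →
      u ≠ u' → ¬(χ (s(u, x)) = c ∧ χ (s(u', y)) = c)) : False := by
  classical
  set U : Finset (Sym2 (Fin n)) := Finset.univ.biUnion F with hU
  have hdisj : ∀ c₁ ∈ (Finset.univ : Finset (Fin t)), ∀ c₂ ∈ Finset.univ, c₁ ≠ c₂ →
      Disjoint (F c₁) (F c₂) := by
    intro c₁ _ c₂ _ hne
    rw [Finset.disjoint_left]
    intro e he1 he2
    exact hne (((hFcol c₁ e he1).2.symm).trans (hFcol c₂ e he2).2)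
  have hUcard : U.card = ∑ c, (F c).card := Finset.card_biUnion hdisj
  let zc : Bool → Fin n := fun b => if b then x else y
  have hz : ∀ b : Bool, zc b = x ∨ zc b = y := by
    intro b; cases b <;> simp [zc]
  have hex : ∀ p : Fin n × Bool, p.1 ∈ S →
      ∃ g ∈ F (χ (s(p.1, zc p.2))), p.1 ∈ g := by
    intro p hp; exact hnP1 p.1 hp (zc p.2) (hz p.2)
  let m : Fin n × Bool → Sym2 (Fin n) := fun p =>
    if h : p.1 ∈ S then (hex p h).choose else s(x, x)
  have hm : ∀ p : Fin n × Bool, p.1 ∈ S →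
      m p ∈ F (χ (s(p.1, zc p.2))) ∧ p.1 ∈ m p := by
    intro p hp
    have h1 := (hex p hp).choose_spec
    simp only [m, dif_pos hp]
    exact h1
  have hmaps : ∀ p ∈ S ×ˢ (Finset.univ : Finset Bool), m p ∈ U := by
    intro p hp
    have hp1 : p.1 ∈ S := (Finset.mem_product.mp hp).1
    exact Finset.mem_biUnion.mpr ⟨_, Finset.mem_univ _, (hm p hp1).1⟩
  have hfib := Finset.card_eq_sum_card_fiberwise hmaps
  have hfib2 : ∀ g ∈ U, ((S ×ˢ (Finset.univ : Finset Bool)).filter (fun p => m p = g)).card ≤ 2 := by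
    intro g hg
    obtain ⟨c, _, hgc⟩ := Finset.mem_biUnion.mp hg
    obtain ⟨hgd, hgcol⟩ := hFcol c g hgc
    induction g using Sym2.ind with
    | _ a b =>
      have hab : a ≠ b := by
        intro h; exact hgd (by simp [Sym2.mk_isDiag_iff, h])
      have hmem : ∀ p ∈ (S ×ˢ (Finset.univ : Finset Bool)).filter
          (fun p => m p = s(a, b)),
          p.1 ∈ S ∧ (p.1 = a ∨ p.1 = b) ∧ χ (s(p.1, zc p.2)) = c := by
        intro p hp
        obtain ⟨hp1, hp2⟩ := Finset.mem_filter.mp hp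
        have hpS : p.1 ∈ S := (Finset.mem_product.mp hp1).1
        obtain ⟨hmF, hmIn⟩ := hm p hpS
        rw [hp2] at hmF hmIn
        have hcoleq : χ (s(a, b)) = χ (s(p.1, zc p.2)) :=
          (hFcol _ _ hmF).2
        refine ⟨hpS, ?_, hcoleq.symm.trans hgcol⟩
        rw [Sym2.mem_iff] at hmIn
        exact hmIn
      have haB : a ∈ s(a, b) := by simp
      have hbB : b ∈ s(a, b) := by simp
      have hzt : zc true = x := by simp [zc]
      have hzf : zc false = y := by simp [zc]
      have hinj : Set.InjOn (fun p : Fin n × Bool => if p.1 = a then p.2 else !p.2)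
          ((S ×ˢ (Finset.univ : Finset Bool)).filter (fun p => m p = s(a, b))) := by
        intro p hp q hq hpq
        have hp' := hmem p (by exact_mod_cast hp)
        have hq' := hmem q (by exact_mod_cast hq)
        simp only at hpq
        rcases hp'.2.1 with hpa | hpb <;> rcases hq'.2.1 with hqa | hqb
        · rw [if_pos hpa, if_pos hqa] at hpq
          exact Prod.ext (hpa.trans hqa.symm) hpq
        · exfalso
          rw [if_pos hpa, if_neg (by rw [hqb]; exact hab.symm)] at hpq
          have hcp := hp'.2.2; have hcq := hq'.2.2
          rw [hpa] at hcp; rw [hqb] at hcq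
          cases hp2 : p.2 <;> cases hq2 : q.2 <;> rw [hp2, hq2] at hpq <;>
            simp only [Bool.not_true, Bool.not_false] at hpq
          · simp at hpq
          · rw [hp2, hzf] at hcp; rw [hq2, hzt] at hcq
            exact hnP2 c (s(a, b)) hgc b a hbB haB hab.symm ⟨hcq, hcp⟩
          · rw [hp2, hzt] at hcp; rw [hq2, hzf] at hcq
            exact hnP2 c (s(a, b)) hgc a b haB hbB hab ⟨hcp, hcq⟩
          · simp at hpq
        · exfalso
          rw [if_neg (by rw [hpb]; exact hab.symm), if_pos hqa] at hpq
          have hcp := hp'.2.2; have hcq := hq'.2.2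
          rw [hpb] at hcp; rw [hqa] at hcq
          cases hp2 : p.2 <;> cases hq2 : q.2 <;> rw [hp2, hq2] at hpq <;>
            simp only [Bool.not_true, Bool.not_false] at hpq
          · simp at hpq
          · rw [hp2, hzf] at hcp; rw [hq2, hzt] at hcq
            exact hnP2 c (s(a, b)) hgc a b haB hbB hab ⟨hcq, hcp⟩
          · rw [hp2, hzt] at hcp; rw [hq2, hzf] at hcq
            exact hnP2 c (s(a, b)) hgc b a hbB haB hab.symm ⟨hcp, hcq⟩
          · simp at hpq
        · rw [if_neg (by rw [hpb]; exact hab.symm), if_neg (by rw [hqb]; exact hab.symm)] at hpq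
          have hpq2 : p.2 = q.2 := by
            cases hp2 : p.2 <;> cases hq2 : q.2 <;> rw [hp2, hq2] at hpq <;> simp_all
          exact Prod.ext (hpb.trans hqb.symm) hpq2
      calc ((S ×ˢ (Finset.univ : Finset Bool)).filter (fun p => m p = s(a, b))).card
          ≤ (Finset.univ : Finset Bool).card :=
            Finset.card_le_card_of_injOn _ (fun p _ => Finset.mem_univ _) hinj
        _ = 2 := by simp
  have h1 : (S ×ˢ (Finset.univ : Finset Bool)).card = S.card * 2 := by
    simp [Finset.card_product]
  have h2 : ∑ g ∈ U, ((S ×ˢ (Finset.univ : Finset Bool)).filter (fun p => m p = g)).card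
      ≤ 2 * U.card := by
    calc ∑ g ∈ U, ((S ×ˢ (Finset.univ : Finset Bool)).filter (fun p => m p = g)).card
        ≤ ∑ _g ∈ U, 2 := Finset.sum_le_sum hfib2
      _ = 2 * U.card := by rw [Finset.sum_const, smul_eq_mul]; omega
  rw [hfib] at h1
  omega

end CockayneLorimer
namespace CockayneLorimer
variable {n t : ℕ}

theorem buildStep (χ : Sym2 (Fin n) → Fin t) (A : Finset (Fin n)) (r : Fin t → ℕ)
    (hr : ∀ i, 1 ≤ r i) :
    ∀ K : Finset (Fin t),
    (∀ k ∈ K, ∃ x ∈ A, ∃ y ∈ A, x ≠ y ∧ χ (s(x, y)) = k) →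
    (∀ k ∈ K, 2 ≤ r k) →
    (∃ i, MatchIn χ i (r i) A) ∨
    ∃ (S : Finset (Fin n)) (F : Fin t → Finset (Sym2 (Fin n))), S ⊆ A ∧
      (∀ k ∈ K, 1 ≤ (F k).card) ∧
      (∀ c, (F c).card + 1 ≤ r c) ∧
      (∀ c, ∀ e ∈ F c, ¬ e.IsDiag ∧ χ e = c ∧ ∀ v ∈ e, v ∈ S) ∧
      (∀ c, ∀ e ∈ F c, ∀ f ∈ F c, e ≠ f → ∀ v : Fin n, v ∈ e → v ∉ f) ∧
      S.card ≤ 1 + ∑ c, (F c).card := by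
  intro K
  induction K using Finset.induction_on with
  | empty =>
      intro _ _
      right
      refine ⟨∅, fun _ => ∅, by simp, by simp, fun c => by simpa using hr c, by simp,
        by simp, by simp⟩
  | @insert k K hkK ih =>
      intro hKedge hKr
      rcases ih (fun k' hk' => hKedge k' (Finset.mem_insert_of_mem hk'))
          (fun k' hk' => hKr k' (Finset.mem_insert_of_mem hk')) with hwin | hstruct
      · exact Or.inl hwin
      obtain ⟨S, F, hSA, hcov, hcap, hFe, hFm, hbud⟩ := hstruct
      by_cases hFk : 1 ≤ (F k).card
      · right
        refine ⟨S, F, hSA, ?_, hcap, hFe, hFm, hbud⟩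
        intro k' hk'
        rcases Finset.mem_insert.mp hk' with rfl | hk'
        · exact hFk
        · exact hcov k' hk'
      push_neg at hFk
      have hFkempty : F k = ∅ := Finset.card_eq_zero.mp (by omega)
      obtain ⟨x, hxA, y, hyA, hxy, hcolk⟩ := hKedge k (Finset.mem_insert_self k K)
      have hrk2 : 2 ≤ r k := hKr k (Finset.mem_insert_self k K)
      -- helper 1: color k gets a single edge s(a,b) and S grows to S'.
      have finishSingle : ∀ (a b : Fin n), a ∈ A → b ∈ A → a ≠ b →
          χ (s(a, b)) = k →
          ∀ S' : Finset (Fin n), S ⊆ S' → S' ⊆ A → a ∈ S' → b ∈ S' →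
          S'.card ≤ 2 + ∑ c, (F c).card →
          (∃ i, MatchIn χ i (r i) A) ∨
          ∃ (S₀ : Finset (Fin n)) (F₀ : Fin t → Finset (Sym2 (Fin n))), S₀ ⊆ A ∧
            (∀ k' ∈ insert k K, 1 ≤ (F₀ k').card) ∧
            (∀ c, (F₀ c).card + 1 ≤ r c) ∧
            (∀ c, ∀ e ∈ F₀ c, ¬ e.IsDiag ∧ χ e = c ∧ ∀ v ∈ e, v ∈ S₀) ∧
            (∀ c, ∀ e ∈ F₀ c, ∀ f ∈ F₀ c, e ≠ f → ∀ v : Fin n, v ∈ e → v ∉ f) ∧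
            S₀.card ≤ 1 + ∑ c, (F₀ c).card := by
        intro a b haA hbA hab hcol S' hSS' hS'A haS' hbS' hS'card
        right
        set F' := Function.update F k {s(a, b)} with hF'def
        have hsum := sum_card_update F k {s(a, b)}
        rw [Finset.card_singleton, ← hF'def] at hsum
        refine ⟨S', F', hS'A, ?_, ?_, ?_, ?_, ?_⟩
        · intro k' hk'
          rcases Finset.mem_insert.mp hk' with rfl | hk'
          · rw [hF'def, Function.update_self]; simp
          · have hkk' : k' ≠ k := fun h => hkK (h ▸ hk')
            rw [hF'def, Function.update_of_ne hkk']
            exact hcov k' hk'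
        · intro c
          by_cases hc : c = k
          · subst hc; rw [hF'def, Function.update_self]; simpa using hrk2
          · rw [hF'def, Function.update_of_ne hc]; exact hcap c
        · intro c e he
          by_cases hc : c = k
          · subst hc
            rw [hF'def, Function.update_self, Finset.mem_singleton] at he
            subst he
            refine ⟨by simp [Sym2.mk_isDiag_iff, hab], hcol, ?_⟩
            intro v hv
            rw [Sym2.mem_iff] at hv
            rcases hv with rfl | rfl
            · exact haS'
            · exact hbS'
          · rw [hF'def, Function.update_of_ne hc] at he
            obtain ⟨h1, h2, h3⟩ := hFe c e he
            exact ⟨h1, h2, fun v hv => hSS' (h3 v hv)⟩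
        · intro c e he f hf
          by_cases hc : c = k
          · subst hc
            rw [hF'def, Function.update_self, Finset.mem_singleton] at he hf
            subst he; subst hf
            intro h; exact absurd rfl h
          · rw [hF'def, Function.update_of_ne hc] at he hf
            exact hFm c e he f hf
        · omega
      by_cases hxS : x ∈ S
      · exact finishSingle x y hxA hyA hxy hcolk (insert y S) (Finset.subset_insert y S)
          (Finset.insert_subset hyA hSA) (Finset.mem_insert_of_mem hxS)
          (Finset.mem_insert_self y S)
          (by have := Finset.card_insert_le y S; omega)
      by_cases hyS : y ∈ S
      · exact finishSingle x y hxA hyA hxy hcolk (insert x S) (Finset.subset_insert x S)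
          (Finset.insert_subset hxA hSA) (Finset.mem_insert_self x S)
          (Finset.mem_insert_of_mem hyS)
          (by have := Finset.card_insert_le x S; omega)
      -- both endpoints outside S
      set S' := insert x (insert y S) with hS'def
      have hSS' : S ⊆ S' := (Finset.subset_insert y S).trans (Finset.subset_insert x _)
      have hS'A : S' ⊆ A := Finset.insert_subset hxA (Finset.insert_subset hyA hSA)
      have hxS' : x ∈ S' := Finset.mem_insert_self x _
      have hyS' : y ∈ S' := Finset.mem_insert_of_mem (Finset.mem_insert_self y S)
      have hS'card : S'.card ≤ S.card + 2 := by
        rw [hS'def]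
        have h1 := Finset.card_insert_le x (insert y S)
        have h2 := Finset.card_insert_le y S
        omega
      by_cases hslack : S.card ≤ ∑ c, (F c).card
      · exact finishSingle x y hxA hyA hxy hcolk S' hSS' hS'A hxS' hyS' (by omega)
      have hcardeq : S.card = 1 + ∑ c, (F c).card := by omega
      -- helper 2: replace colour c₀'s matching by `G` (one bigger), and add s(x,y) for k.
      have finishG : ∀ (c₀ : Fin t), c₀ ≠ k → ∀ G : Finset (Sym2 (Fin n)),
          G.card = (F c₀).card + 1 →
          (∀ e ∈ G, ¬ e.IsDiag ∧ χ e = c₀ ∧ ∀ v ∈ e, v ∈ S') →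
          (∀ e ∈ G, ∀ f ∈ G, e ≠ f → ∀ v : Fin n, v ∈ e → v ∉ f) →
          (∃ i, MatchIn χ i (r i) A) ∨
          ∃ (S₀ : Finset (Fin n)) (F₀ : Fin t → Finset (Sym2 (Fin n))), S₀ ⊆ A ∧
            (∀ k' ∈ insert k K, 1 ≤ (F₀ k').card) ∧
            (∀ c, (F₀ c).card + 1 ≤ r c) ∧
            (∀ c, ∀ e ∈ F₀ c, ¬ e.IsDiag ∧ χ e = c ∧ ∀ v ∈ e, v ∈ S₀) ∧
            (∀ c, ∀ e ∈ F₀ c, ∀ f ∈ F₀ c, e ≠ f → ∀ v : Fin n, v ∈ e → v ∉ f) ∧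
            S₀.card ≤ 1 + ∑ c, (F₀ c).card := by
        intro c₀ hc₀k G hGcard hGe hGm
        by_cases hcap2 : (F c₀).card + 2 ≤ r c₀
        · right
          set F1 := Function.update F k {s(x, y)} with hF1def
          set F2 := Function.update F1 c₀ G with hF2def
          have hsum1 := sum_card_update F k {s(x, y)}
          rw [Finset.card_singleton, ← hF1def] at hsum1
          have hsum2 := sum_card_update F1 c₀ G
          rw [← hF2def] at hsum2
          have hF1c₀ : F1 c₀ = F c₀ := by rw [hF1def, Function.update_of_ne hc₀k]
          rw [hF1c₀] at hsum2
          have hF2k : F2 k = {s(x, y)} := by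
            rw [hF2def, Function.update_of_ne (Ne.symm hc₀k), hF1def, Function.update_self]
          have hF2c₀ : F2 c₀ = G := by rw [hF2def, Function.update_self]
          have hF2other : ∀ c, c ≠ k → c ≠ c₀ → F2 c = F c := by
            intro c h1 h2
            rw [hF2def, Function.update_of_ne h2, hF1def, Function.update_of_ne h1]
          refine ⟨S', F2, hS'A, ?_, ?_, ?_, ?_, ?_⟩
          · intro k' hk'
            rcases Finset.mem_insert.mp hk' with rfl | hk'
            · rw [hF2k]; simp
            · have hkk' : k' ≠ k := fun h => hkK (h ▸ hk')
              by_cases hc : k' = c₀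
              · subst hc; rw [hF2c₀]; omega
              · rw [hF2other k' hkk' hc]; exact hcov k' hk'
          · intro c
            by_cases h1 : c = k
            · subst h1; rw [hF2k]; simpa using hrk2
            · by_cases h2 : c = c₀
              · subst h2; rw [hF2c₀]; omega
              · rw [hF2other c h1 h2]; exact hcap c
          · intro c e he
            by_cases h1 : c = k
            · subst h1; rw [hF2k, Finset.mem_singleton] at he; subst he
              refine ⟨by simp [Sym2.mk_isDiag_iff, hxy], hcolk, ?_⟩
              intro v hv; rw [Sym2.mem_iff] at hv
              rcases hv with rfl | rfl
              · exact hxS'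
              · exact hyS'
            · by_cases h2 : c = c₀
              · subst h2; rw [hF2c₀] at he; exact hGe e he
              · rw [hF2other c h1 h2] at he
                obtain ⟨p1, p2, p3⟩ := hFe c e he
                exact ⟨p1, p2, fun v hv => hSS' (p3 v hv)⟩
          · intro c e he f hf
            by_cases h1 : c = k
            · subst h1; rw [hF2k, Finset.mem_singleton] at he hf
              subst he; subst hf; intro h; exact absurd rfl h
            · by_cases h2 : c = c₀
              · subst h2; rw [hF2c₀] at he hf; exact hGm e he f hf
              · rw [hF2other c h1 h2] at he hf; exact hFm c e he f hf
          · omega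
        · -- the new matching G has full size r c₀ : direct win
          left
          have hceq : (F c₀).card + 1 = r c₀ := by have := hcap c₀; omega
          refine ⟨c₀, G, by omega, ?_, hGm⟩
          intro e he
          obtain ⟨p1, p2, p3⟩ := hGe e he
          exact ⟨p1, p2, fun v hv => hS'A (p3 v hv)⟩
      -- case analysis : P1, P2 or the impossible stuck case
      by_cases hP1 : ∃ u ∈ S, ∃ z : Fin n, (z = x ∨ z = y) ∧
          ∀ g ∈ F (χ (s(u, z))), u ∉ g
      · obtain ⟨u, huS, z, hz, hout⟩ := hP1
        have hzA : z ∈ A := by rcases hz with rfl | rfl; exacts [hxA, hyA]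
        have hzS : z ∉ S := by rcases hz with rfl | rfl; exacts [hxS, hyS]
        have hzS' : z ∈ S' := by rcases hz with rfl | rfl; exacts [hxS', hyS']
        have huz : u ≠ z := fun h => hzS (h ▸ huS)
        by_cases hc₀k : χ (s(u, z)) = k
        · exact finishSingle u z (hSA huS) hzA huz hc₀k (insert z S)
            (Finset.subset_insert z S) (Finset.insert_subset hzA hSA)
            (Finset.mem_insert_of_mem huS) (Finset.mem_insert_self z S)
            (by have := Finset.card_insert_le z S; omega)
        · have hnotmem : s(u, z) ∉ F (χ (s(u, z))) := by
            intro hmem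
            exact hzS ((hFe _ _ hmem).2.2 z (by simp))
          apply finishG (χ (s(u, z))) hc₀k (insert (s(u, z)) (F (χ (s(u, z)))))
            (Finset.card_insert_of_notMem hnotmem)
          · intro e he
            rcases Finset.mem_insert.mp he with rfl | he
            · refine ⟨by simp [Sym2.mk_isDiag_iff, huz], rfl, ?_⟩
              intro v hv; rw [Sym2.mem_iff] at hv
              rcases hv with rfl | rfl
              · exact hSS' huS
              · exact hzS'
            · obtain ⟨p1, p2, p3⟩ := hFe _ e he
              exact ⟨p1, p2, fun v hv => hSS' (p3 v hv)⟩
          · intro e he f hf hef v hv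
            rcases Finset.mem_insert.mp he with rfl | he' <;>
              rcases Finset.mem_insert.mp hf with rfl | hf'
            · exact absurd rfl hef
            · rw [Sym2.mem_iff] at hv
              rcases hv with rfl | rfl
              · exact hout f hf'
              · intro hvf; exact hzS ((hFe _ f hf').2.2 _ hvf)
            · intro hvf; rw [Sym2.mem_iff] at hvf
              rcases hvf with rfl | rfl
              · exact hout e he' hv
              · exact hzS ((hFe _ e he').2.2 _ hv)
            · exact hFm _ e he' f hf' hef v hv
      · push_neg at hP1
        by_cases hP2 : ∃ c, ∃ g ∈ F c, ∃ u, u ∈ g ∧ ∃ u', u' ∈ g ∧ u ≠ u' ∧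
            χ (s(u, x)) = c ∧ χ (s(u', y)) = c
        · obtain ⟨c, g, hg, u, hug, u', hu'g, huu', hcux, hcu'y⟩ := hP2
          have hc₀k : c ≠ k := by
            intro h; subst h; rw [hFkempty] at hg; exact absurd hg (Finset.notMem_empty g)
          have huS : u ∈ S := (hFe c g hg).2.2 u hug
          have hu'S : u' ∈ S := (hFe c g hg).2.2 u' hu'g
          have hux : u ≠ x := fun h => hxS (h ▸ huS)
          have hu'y : u' ≠ y := fun h => hyS (h ▸ hu'S)
          have hm1 : s(u', y) ∉ (F c).erase g := by
            intro hmem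
            exact hyS ((hFe c _ (Finset.mem_of_mem_erase hmem)).2.2 y (by simp))
          have hm2 : s(u, x) ∉ insert (s(u', y)) ((F c).erase g) := by
            intro hmem
            rcases Finset.mem_insert.mp hmem with heq | hmem'
            · have : x ∈ s(u', y) := heq ▸ (by simp : x ∈ s(u, x))
              rw [Sym2.mem_iff] at this
              rcases this with rfl | rfl
              · exact hxS hu'S
              · exact hxy rfl
            · exact hxS ((hFe c _ (Finset.mem_of_mem_erase hmem')).2.2 x (by simp))
          have hGcard : (insert (s(u, x)) (insert (s(u', y)) ((F c).erase g))).card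
              = (F c).card + 1 := by
            rw [Finset.card_insert_of_notMem hm2, Finset.card_insert_of_notMem hm1,
              Finset.card_erase_of_mem hg]
            have : 1 ≤ (F c).card := Finset.card_pos.mpr ⟨g, hg⟩
            omega
          -- disjointness facts of old edges versus u, u', x, y
          have hold : ∀ f ∈ (F c).erase g, u ∉ f ∧ u' ∉ f ∧ x ∉ f ∧ y ∉ f := by
            intro f hf
            have hfg : f ≠ g := Finset.ne_of_mem_erase hf
            have hfF : f ∈ F c := Finset.mem_of_mem_erase hf
            refine ⟨fun h => hFm c g hg f hfF (Ne.symm hfg) u hug h,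
              fun h => hFm c g hg f hfF (Ne.symm hfg) u' hu'g h, ?_, ?_⟩
            · intro h; exact hxS ((hFe c f hfF).2.2 x h)
            · intro h; exact hyS ((hFe c f hfF).2.2 y h)
          apply finishG c hc₀k _ hGcard
          · intro e he
            rcases Finset.mem_insert.mp he with rfl | he'
            · refine ⟨by simp [Sym2.mk_isDiag_iff, hux], hcux, ?_⟩
              intro v hv; rw [Sym2.mem_iff] at hv
              rcases hv with rfl | rfl
              · exact hSS' huS
              · exact hxS'
            · rcases Finset.mem_insert.mp he' with rfl | he''
              · refine ⟨by simp [Sym2.mk_isDiag_iff, hu'y], hcu'y, ?_⟩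
                intro v hv; rw [Sym2.mem_iff] at hv
                rcases hv with rfl | rfl
                · exact hSS' hu'S
                · exact hyS'
              · obtain ⟨p1, p2, p3⟩ := hFe c _ (Finset.mem_of_mem_erase he'')
                exact ⟨p1, p2, fun v hv => hSS' (p3 v hv)⟩
          · -- pairwise disjointness of the new matching
            have hnew : ∀ v : Fin n, v ∈ s(u, x) → v ∉ s(u', y) := by
              intro v hv hv'
              rw [Sym2.mem_iff] at hv hv'
              rcases hv with rfl | rfl <;> rcases hv' with h | h
              · exact huu' h
              · exact hyS (h ▸ huS)
              · exact hxS (h.symm ▸ hu'S)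
              · exact hxy h
            intro e he f hf hef v hv
            rcases Finset.mem_insert.mp he with rfl | he'
            · rcases Finset.mem_insert.mp hf with rfl | hf'
              · exact absurd rfl hef
              · rcases Finset.mem_insert.mp hf' with rfl | hf''
                · exact hnew v hv
                · rw [Sym2.mem_iff] at hv
                  obtain ⟨q1, q2, q3, q4⟩ := hold f hf''
                  rcases hv with rfl | rfl
                  · exact q1
                  · exact q3
            · rcases Finset.mem_insert.mp he' with rfl | he''
              · rcases Finset.mem_insert.mp hf with rfl | hf'
                · intro hvf; exact hnew v hvf hv
                · rcases Finset.mem_insert.mp hf' with rfl | hf''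
                  · exact absurd rfl hef
                  · rw [Sym2.mem_iff] at hv
                    obtain ⟨q1, q2, q3, q4⟩ := hold f hf''
                    rcases hv with rfl | rfl
                    · exact q2
                    · exact q4
              · rcases Finset.mem_insert.mp hf with rfl | hf'
                · intro hvf
                  rw [Sym2.mem_iff] at hvf
                  obtain ⟨q1, q2, q3, q4⟩ := hold e he''
                  rcases hvf with rfl | rfl
                  · exact q1 hv
                  · exact q3 hv
                · rcases Finset.mem_insert.mp hf' with rfl | hf''
                  · intro hvf
                    rw [Sym2.mem_iff] at hvf
                    obtain ⟨q1, q2, q3, q4⟩ := hold e he''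
                    rcases hvf with rfl | rfl
                    · exact q2 hv
                    · exact q4 hv
                  · exact hFm c e (Finset.mem_of_mem_erase he'') f
                      (Finset.mem_of_mem_erase hf'') hef v hv
        · -- stuck case : impossible by double counting
          exfalso
          push_neg at hP2
          apply counting χ S F x y (fun c e he => ⟨(hFe c e he).1, (hFe c e he).2.1⟩) hcardeq
          · exact hP1
          · intro c g hg u u' hug hu'g huu'
            exact fun hcc => hP2 c g hg u hug u' hu'g huu' hcc.1 hcc.2

theorem core (χ : Sym2 (Fin n) → Fin t) (ht : 1 ≤ t) (r : Fin t → ℕ) (hr : ∀ i, 1 ≤ r i)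
    (A : Finset (Fin n))
    (hA : Finset.univ.sup r + 1 + ∑ i, (r i - 1) ≤ A.card)
    (hm : 2 ≤ Finset.univ.sup r)
    (hmax : ∀ k, r k = Finset.univ.sup r →
      ∃ x ∈ A, ∃ y ∈ A, x ≠ y ∧ χ (s(x, y)) = k)
    (hedge : ∀ x ∈ A, ∀ y ∈ A, x ≠ y → 2 ≤ r (χ (s(x, y)))) :
    (∃ i, MatchIn χ i (r i) A) ∨
    ∃ (S : Finset (Fin n)) (d : Fin t → ℕ), S ⊆ A ∧
      (∀ k, r k = Finset.univ.sup r → 1 ≤ d k) ∧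
      (∀ c, d c + 1 ≤ r c) ∧
      (∀ c, 1 ≤ d c → MatchIn χ c (d c) S) ∧
      S.card ≤ 1 + ∑ c, d c := by
  rcases buildStep χ A r hr (Finset.univ.filter (fun k => r k = Finset.univ.sup r))
      (fun k hk => hmax k (Finset.mem_filter.mp hk).2)
      (fun k hk => by have := (Finset.mem_filter.mp hk).2; omega) with
    hwin | ⟨S, F, hSA, hcov, hcap, hFe, hFm, hbud⟩
  · exact Or.inl hwin
  · right
    refine ⟨S, fun c => (F c).card, hSA, ?_, hcap, ?_, hbud⟩
    · intro k hk
      exact hcov k (Finset.mem_filter.mpr ⟨Finset.mem_univ k, hk⟩)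
    · intro c _
      exact ⟨F c, rfl, hFe c, hFm c⟩

theorem aux (χ : Sym2 (Fin n) → Fin t) (ht : 1 ≤ t) :
    ∀ (N : ℕ) (r : Fin t → ℕ), (∑ i, r i ≤ N) → (∀ i, 1 ≤ r i) →
    ∀ (A : Finset (Fin n)), (Finset.univ.sup r + 1 + ∑ i, (r i - 1) ≤ A.card) →
    ∃ i, MatchIn χ i (r i) A := by
  intro N
  induction N with
  | zero =>
      intro r hN hr A hA
      exfalso
      have h1 : 1 ≤ ∑ i, r i :=
        le_trans (hr ⟨0, by omega⟩) (Finset.single_le_sum (fun i _ => Nat.zero_le _) (Finset.mem_univ _))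
      omega
  | succ N ih =>
      intro r hN hr A hA
      set m := Finset.univ.sup r with hmdef
      have huniv : (Finset.univ : Finset (Fin t)).Nonempty := by
        simpa [Finset.univ_nonempty_iff] using Fin.pos_iff_nonempty.mp ht
      obtain ⟨k₀, _, hk₀⟩ := Finset.exists_mem_eq_sup Finset.univ huniv r
      have hrle : ∀ i, r i ≤ m := fun i => Finset.le_sup (Finset.mem_univ i)
      have hm1 : 1 ≤ m := le_trans (hr k₀) (hrle k₀)
      -- two distinct vertices in A
      have hA2 : 2 ≤ A.card := by
        have hs0 : 0 ≤ ∑ i, (r i - 1) := Nat.zero_le _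
        omega
      obtain ⟨x₀, hx₀, y₀, hy₀, hxy₀⟩ := Finset.one_lt_card.mp hA2
      by_cases hm2 : m ≤ 1
      · -- all targets equal 1 : any edge wins
        have h1 : r (χ (s(x₀, y₀))) = 1 := le_antisymm (le_trans (hrle _) hm2) (hr _)
        exact ⟨χ (s(x₀, y₀)), h1 ▸ matchIn_single hx₀ hy₀ hxy₀⟩
      · push_neg at hm2
        by_cases hsmall : ∃ x ∈ A, ∃ y ∈ A, x ≠ y ∧ r (χ (s(x, y))) = 1
        · obtain ⟨x, hx, y, hy, hxy, h1⟩ := hsmall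
          exact ⟨χ (s(x, y)), h1 ▸ matchIn_single hx hy hxy⟩
        · push_neg at hsmall
          by_cases habs : ∃ k, r k = m ∧ ¬∃ x ∈ A, ∃ y ∈ A, x ≠ y ∧ χ (s(x, y)) = k
          · -- an edgeless maximum colour: set its target to 1 and recurse
            obtain ⟨k, hkm, hknoedge⟩ := habs
            set r' : Fin t → ℕ := Function.update r k 1 with hr'def
            have hr'k : r' k = 1 := Function.update_self k 1 r
            have hr'ne : ∀ i, i ≠ k → r' i = r i := fun i hi => Function.update_of_ne hi 1 r
            have hne : ∀ i ∈ Finset.univ \ {k}, i ≠ k := by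
              intro i hi
              have := (Finset.mem_sdiff.mp hi).2
              simpa using this
            have hsum' : ∑ i, r' i + r k = (∑ i, r i) + 1 := by
              have e1 : ∑ i, r' i = ∑ i ∈ Finset.univ \ {k}, r' i + r' k :=
                Finset.sum_eq_sum_sdiff_singleton_add (Finset.mem_univ k) r'
              have e2 : ∑ i, r i = ∑ i ∈ Finset.univ \ {k}, r i + r k :=
                Finset.sum_eq_sum_sdiff_singleton_add (Finset.mem_univ k) r
              have e3 : ∑ i ∈ Finset.univ \ {k}, r' i = ∑ i ∈ Finset.univ \ {k}, r i :=
                Finset.sum_congr rfl (fun i hi => hr'ne i (hne i hi))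
              omega
            have hr' : ∀ i, 1 ≤ r' i := by
              intro i
              by_cases hik : i = k
              · subst hik; omega
              · rw [hr'ne i hik]; exact hr i
            have hsup' : Finset.univ.sup r' ≤ m := by
              apply Finset.sup_le
              intro i _
              by_cases hik : i = k
              · subst hik; omega
              · rw [hr'ne i hik]; exact hrle i
            have hsub' : ∑ i, (r' i - 1) + (r k - 1) = ∑ i, (r i - 1) := by
              have e1 : ∑ i, (r' i - 1) = ∑ i ∈ Finset.univ \ {k}, (r' i - 1) + (r' k - 1) :=
                Finset.sum_eq_sum_sdiff_singleton_add (Finset.mem_univ k) _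
              have e2 : ∑ i, (r i - 1) = ∑ i ∈ Finset.univ \ {k}, (r i - 1) + (r k - 1) :=
                Finset.sum_eq_sum_sdiff_singleton_add (Finset.mem_univ k) _
              have e3 : ∑ i ∈ Finset.univ \ {k}, (r' i - 1) = ∑ i ∈ Finset.univ \ {k}, (r i - 1) :=
                Finset.sum_congr rfl (fun i hi => by rw [hr'ne i (hne i hi)])
              omega
            have hA' : Finset.univ.sup r' + 1 + ∑ i, (r' i - 1) ≤ A.card := by
              have : ∑ i, (r' i - 1) ≤ ∑ i, (r i - 1) := by omega
              omega
            obtain ⟨i, Mi⟩ := ih r' (by omega) hr' A hA'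
            by_cases hik : i = k
            · subst hik
              exfalso
              rw [hr'k] at Mi
              obtain ⟨M, hM1, hM2, _⟩ := Mi
              obtain ⟨e, he⟩ := Finset.card_eq_one.mp hM1
              have heM : e ∈ M := by simp [he]
              obtain ⟨hdiag, hcol, hin⟩ := hM2 e heM
              induction e using Sym2.ind with
              | _ x y =>
                apply hknoedge
                refine ⟨x, hin x (by simp), y, hin y (by simp), ?_, hcol⟩
                intro hxyeq
                exact hdiag (by simp [Sym2.mk_isDiag_iff, hxyeq])
            · rw [hr'ne i hik] at Mi
              exact ⟨i, Mi⟩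
          · -- main reduction via `core`
            push_neg at habs
            rcases core χ ht r hr A hA hm2 (by
              intro k hk
              exact habs k hk) (by
              intro x hx y hy hxy
              have h1 := hsmall x hx y hy hxy
              have h2 := hr (χ (s(x, y)))
              omega) with hwin | ⟨S, d, hSA, hdK, hdr, hdM, hScard⟩
            · exact hwin
            · set r' : Fin t → ℕ := fun c => r c - d c with hr'def
              have hr' : ∀ i, 1 ≤ r' i := by
                intro i; have := hdr i; simp only [hr'def]; omega
              have hdsum_le : ∑ c, d c ≤ ∑ i, (r i - 1) := by
                apply Finset.sum_le_sum
                intro i _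
                have := hdr i
                omega
              have hd1 : 1 ≤ ∑ c, d c :=
                le_trans (hdK k₀ hk₀.symm)
                  (Finset.single_le_sum (fun i _ => Nat.zero_le _) (Finset.mem_univ k₀))
              have hsum' : ∑ i, r' i + ∑ c, d c = ∑ i, r i := by
                rw [← Finset.sum_add_distrib]
                apply Finset.sum_congr rfl
                intro i _
                have := hdr i
                simp only [hr'def]
                omega
              have hsub' : ∑ i, (r' i - 1) + ∑ c, d c = ∑ i, (r i - 1) := by
                rw [← Finset.sum_add_distrib]
                apply Finset.sum_congr rfl
                intro i _
                have := hdr i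
                simp only [hr'def]
                omega
              have hsup' : Finset.univ.sup r' + 1 ≤ m := by
                have : ∀ i, r' i ≤ m - 1 := by
                  intro i
                  by_cases him : r i = m
                  · have := hdK i him
                    simp only [hr'def]
                    omega
                  · have h1 : r i ≤ m := hrle i
                    have : r i ≤ m - 1 := by omega
                    simp only [hr'def]
                    omega
                have := Finset.sup_le (fun i (_ : i ∈ Finset.univ) => this i)
                omega
              have hcardS : S.card ≤ A.card := Finset.card_le_card hSA
              have hA' : Finset.univ.sup r' + 1 + ∑ i, (r' i - 1) ≤ (A \ S).card := by
                rw [Finset.card_sdiff_of_subset hSA]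
                omega
              obtain ⟨i, Mi⟩ := ih r' (by omega) hr' (A \ S) hA'
              refine ⟨i, ?_⟩
              by_cases hdi : d i = 0
              · have : r' i = r i := by simp [hr'def, hdi]
                rw [this] at Mi
                exact Mi.mono (Finset.sdiff_subset)
              · obtain ⟨M1, hM11, hM12, hM13⟩ := Mi
                obtain ⟨M2, hM21, hM22, hM23⟩ := hdM i (by omega)
                have hdisjM : Disjoint M1 M2 := by
                  rw [Finset.disjoint_left]
                  intro e he1 he2
                  induction e using Sym2.ind with
                  | _ x y =>
                    have h1 := (hM12 _ he1).2.2 x (by simp)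
                    have h2 := (hM22 _ he2).2.2 x (by simp)
                    exact (Finset.mem_sdiff.mp h1).2 h2
                refine ⟨M1 ∪ M2, ?_, ?_, ?_⟩
                · rw [Finset.card_union_of_disjoint hdisjM, hM11, hM21]
                  simp only [hr'def]
                  have := hdr i
                  omega
                · intro e he
                  rcases Finset.mem_union.mp he with h | h
                  · obtain ⟨h1, h2, h3⟩ := hM12 e h
                    exact ⟨h1, h2, fun v hv => (Finset.mem_sdiff.mp (h3 v hv)).1⟩
                  · obtain ⟨h1, h2, h3⟩ := hM22 e h
                    exact ⟨h1, h2, fun v hv => hSA (h3 v hv)⟩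
                · intro e he f hf hef v hv
                  rcases Finset.mem_union.mp he with he' | he' <;>
                    rcases Finset.mem_union.mp hf with hf' | hf'
                  · exact hM13 e he' f hf' hef v hv
                  · have h1 := (hM12 e he').2.2 v hv
                    intro hvf
                    have h2 := (hM22 f hf').2.2 v hvf
                    exact (Finset.mem_sdiff.mp h1).2 h2
                  · have h1 := (hM22 e he').2.2 v hv
                    intro hvf
                    have h2 := (hM12 f hf').2.2 v hvf
                    exact (Finset.mem_sdiff.mp h2).2 h1
                  · exact hM23 e he' f hf' hef v hv

end CockayneLorimer

/-- Existence direction of the Cockayne–Lorimer theorem: if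
`n ≥ max_i r_i + 1 + ∑_i (r_i − 1)`, then every `t`-coloring of `E(K_n)` contains,
for some color `i`, a matching of size `r_i` in color `i`. -/
theorem cockayne_lorimer_existence (t : ℕ) (ht : 2 ≤ t) (r : Fin t → ℕ)
    (hr : ∀ i, 1 ≤ r i) (n : ℕ)
    (hn : Finset.univ.sup r + 1 + ∑ i, (r i - 1) ≤ n)
    (χ : Sym2 (Fin n) → Fin t) :
    ∃ i : Fin t, IsColorMatching χ i (r i) := by
  have hcard : Finset.univ.sup r + 1 + ∑ i, (r i - 1) ≤ (Finset.univ : Finset (Fin n)).card := by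
    simpa using hn
  obtain ⟨i, M, h1, h2, h3⟩ :=
    CockayneLorimer.aux χ (by omega) (∑ i, r i) r le_rfl hr Finset.univ hcard
  exact ⟨i, M, h1, fun e he => ⟨(h2 e he).1, (h2 e he).2.1⟩, h3⟩
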